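/- Let A be a commutative ring and I an ideal of A. The amalgamated duplication A⋈I is quasi-Frobenius if and only if A is quasi-Frobenius and there exists an idempotent e ∈ A with I = eA. -/

import Mathlib

section Amalg
variable {A B : Type*} [CommRing A] [CommRing B]

/-- The amalgamation `A ⋈^f J = {(a, f a + j) | a ∈ A, j ∈ J}` as a subring of `A × B`. -/
def amalg (f : A →+* B) (J : Ideal B) : Subring (A × B) where
  carrier := {x | x.2 - f x.1 ∈ J}
  one_mem' := by simp
  zero_mem' := by simp
  mul_mem' := by
    rintro x y hx hy
    show (x * y).2 - f (x * y).1 ∈ J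
    have h : (x * y).2 - f (x * y).1 = x.2 * (y.2 - f y.1) + (x.2 - f x.1) * f y.1 := by
      simp only [Prod.fst_mul, Prod.snd_mul, map_mul]; ring
    rw [h]
    exact J.add_mem (J.mul_mem_left _ hy) (J.mul_mem_right _ hx)
  add_mem' := by
    rintro x y hx hy
    show (x + y).2 - f (x + y).1 ∈ J
    have h : (x + y).2 - f (x + y).1 = (x.2 - f x.1) + (y.2 - f y.1) := by
      simp only [Prod.fst_add, Prod.snd_add, map_add]; ring
    rw [h]; exact J.add_mem hx hy
  neg_mem' := by
    intro x hx
    show (-x).2 - f (-x).1 ∈ J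
    have h : (-x).2 - f (-x).1 = -(x.2 - f x.1) := by
      simp only [Prod.fst_neg, Prod.snd_neg, map_neg]; ring
    rw [h]; exact J.neg_mem hx

/-- The canonical embedding `A → A ⋈^f J`, `a ↦ (a, f a)`. -/
def amalgIota (f : A →+* B) (J : Ideal B) : A →+* amalg f J :=
  ((RingHom.id A).prod f).codRestrict (amalg f J) (fun a =>
    show (a, f a).2 - f (a, f a).1 ∈ J by simp)

/-- The projection `A ⋈^f J → A`. -/
def amalgFst (f : A →+* B) (J : Ideal B) : amalg f J →+* A :=
  (RingHom.fst A B).comp (amalg f J).subtype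

end Amalg

/-- A commutative ring is quasi-Frobenius if it is Noetherian and self-injective. -/
def IsQuasiFrobenius (A : Type*) [CommRing A] : Prop :=
  IsNoetherianRing A ∧ Module.Injective A A

set_option synthInstance.maxHeartbeats 1000000
set_option maxHeartbeats 1000000


section AuxQF
variable {R S : Type*} [CommRing R] [CommRing S]

variable {R S : Type*} [CommRing R] [CommRing S]

/-- Baer-type self-injectivity condition. -/
def BaerSelf (R : Type*) [CommRing R] : Prop :=
  ∀ (J : Ideal R) (f : J →ₗ[R] R), ∃ r : R, ∀ (x : R) (hx : x ∈ J), f ⟨x, hx⟩ = x * r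

lemma baerSelf_iff_baer : BaerSelf R ↔ Module.Baer R R := by
  constructor
  · intro h J g
    obtain ⟨r, hr⟩ := h J g
    refine ⟨r • LinearMap.id, fun x hx => ?_⟩
    simp [hr x hx, mul_comm]
  · intro h J f
    obtain ⟨g', hg'⟩ := h J f
    refine ⟨g' 1, fun x hx => ?_⟩
    rw [← hg' x hx]
    calc g' x = g' (x • 1) := by rw [smul_eq_mul, mul_one]
    _ = x • g' 1 := g'.map_smul x 1
    _ = x * g' 1 := rfl

lemma baerSelf_iff_injective : BaerSelf R ↔ Module.Injective R R :=
  baerSelf_iff_baer.trans Module.Baer.iff_injective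

lemma isQuasiFrobenius_iff : IsQuasiFrobenius R ↔ IsNoetherianRing R ∧ BaerSelf R := by
  rw [IsQuasiFrobenius, baerSelf_iff_injective]

lemma BaerSelf.of_ringEquiv (e : R ≃+* S) (h : BaerSelf R) : BaerSelf S := by
  intro J f
  set J' : Ideal R := J.comap (e : R →+* S) with hJ'
  let f' : J' →ₗ[R] R :=
    { toFun := fun x => e.symm (f ⟨e x.1, x.2⟩)
      map_add' := by
        intro x y
        have h1 : (⟨e ((x + y) : J').1, (x + y).2⟩ : J) = ⟨e x.1, x.2⟩ + ⟨e y.1, y.2⟩ :=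
          Subtype.ext (by simp [map_add])
        simp only [h1, map_add]
      map_smul' := by
        intro c x
        have h1 : (⟨e ((c • x) : J').1, (c • x).2⟩ : J) = (e c) • ⟨e x.1, x.2⟩ :=
          Subtype.ext (by simp [map_mul])
        simp only [h1, map_smul, RingHom.id_apply]
        simp [smul_eq_mul, map_mul] }
  obtain ⟨r, hr⟩ := h J' f'
  simp only [f', LinearMap.coe_mk, AddHom.coe_mk] at hr
  refine ⟨e r, fun y hy => ?_⟩
  have hy' : e.symm y ∈ J' := by
    show e (e.symm y) ∈ J
    rw [e.apply_symm_apply]; exact hy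
  have h2 : (⟨e (e.symm y), hy'⟩ : J) = ⟨y, hy⟩ := Subtype.ext (e.apply_symm_apply y)
  calc f ⟨y, hy⟩ = f ⟨e (e.symm y), hy'⟩ := by rw [h2]
  _ = e (e.symm (f ⟨e (e.symm y), hy'⟩)) := (e.apply_symm_apply _).symm
  _ = e (e.symm y * r) := by rw [hr (e.symm y) hy']
  _ = y * e r := by rw [map_mul, e.apply_symm_apply]

lemma IsQuasiFrobenius.of_ringEquiv (e : R ≃+* S) (h : IsQuasiFrobenius R) :
    IsQuasiFrobenius S := by
  rw [isQuasiFrobenius_iff] at h ⊢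
  haveI := h.1
  exact ⟨isNoetherianRing_of_ringEquiv R e, h.2.of_ringEquiv e⟩


variable {R S : Type*} [CommRing R] [CommRing S]

lemma isNoetherianRing_prod (hR : IsNoetherianRing R) (hS : IsNoetherianRing S) :
    IsNoetherianRing (R × S) := by
  classical
  rw [isNoetherianRing_iff_ideal_fg]
  intro J
  rw [Ideal.ideal_prod_eq J]
  obtain ⟨t1, ht1⟩ := (isNoetherianRing_iff_ideal_fg R).mp hR (J.map (RingHom.fst R S))
  obtain ⟨t2, ht2⟩ := (isNoetherianRing_iff_ideal_fg S).mp hS (J.map (RingHom.snd R S))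
  refine ⟨t1.image (fun r => ((r, 0) : R × S)) ∪ t2.image (fun s => ((0, s) : R × S)), ?_⟩
  have hGsub : ∀ r ∈ t1, ((r, 0) : R × S) ∈
      (↑(t1.image (fun r => ((r, 0) : R × S)) ∪ t2.image (fun s => ((0, s) : R × S))) :
        Set (R × S)) := by
    intro r hr
    rw [Finset.coe_union]
    exact Or.inl (Finset.mem_coe.mpr (Finset.mem_image.mpr ⟨r, hr, rfl⟩))
  have hGsub2 : ∀ s ∈ t2, ((0, s) : R × S) ∈
      (↑(t1.image (fun r => ((r, 0) : R × S)) ∪ t2.image (fun s => ((0, s) : R × S))) :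
        Set (R × S)) := by
    intro s hs
    rw [Finset.coe_union]
    exact Or.inr (Finset.mem_coe.mpr (Finset.mem_image.mpr ⟨s, hs, rfl⟩))
  apply le_antisymm
  · rw [Ideal.span_le]
    rintro ⟨a, b⟩ hx
    rw [Finset.coe_union, Set.mem_union, Finset.mem_coe, Finset.mem_coe,
      Finset.mem_image, Finset.mem_image] at hx
    rcases hx with ⟨r, hr, heq⟩ | ⟨s, hs, heq⟩
    · rw [Prod.mk.injEq] at heq
      obtain ⟨rfl, rfl⟩ := heq
      exact ⟨ht1 ▸ Ideal.subset_span hr, show (0 : S) ∈ J.map (RingHom.snd R S) from Ideal.zero_mem _⟩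
    · rw [Prod.mk.injEq] at heq
      obtain ⟨rfl, rfl⟩ := heq
      exact ⟨show (0 : R) ∈ J.map (RingHom.fst R S) from Ideal.zero_mem _, ht2 ▸ Ideal.subset_span hs⟩
  · rintro ⟨a, b⟩ ⟨ha, hb⟩
    have key1 : ∀ a' ∈ (Ideal.span (t1 : Set R)), ((a', 0) : R × S) ∈
        Ideal.span (↑(t1.image (fun r => ((r, 0) : R × S)) ∪
          t2.image (fun s => ((0, s) : R × S))) : Set (R × S)) := by
      intro a' ha'
      induction ha' using Submodule.span_induction with
      | mem x hx => exact Ideal.subset_span (hGsub x hx)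
      | zero => exact Ideal.zero_mem _
      | add x y _ _ hx hy =>
        have h : ((x + y, 0) : R × S) = (x, 0) + (y, 0) := by simp
        rw [h]; exact Ideal.add_mem _ hx hy
      | smul c x _ hx =>
        have h : ((c • x, 0) : R × S) = ((c, 0) : R × S) * (x, 0) := by
          simp [smul_eq_mul]
        rw [h]; exact Ideal.mul_mem_left _ _ hx
    have key2 : ∀ b' ∈ (Ideal.span (t2 : Set S)), ((0, b') : R × S) ∈
        Ideal.span (↑(t1.image (fun r => ((r, 0) : R × S)) ∪
          t2.image (fun s => ((0, s) : R × S))) : Set (R × S)) := by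
      intro b' hb'
      induction hb' using Submodule.span_induction with
      | mem x hx => exact Ideal.subset_span (hGsub2 x hx)
      | zero => exact Ideal.zero_mem _
      | add x y _ _ hx hy =>
        have h : ((0, x + y) : R × S) = (0, x) + (0, y) := by simp
        rw [h]; exact Ideal.add_mem _ hx hy
      | smul c x _ hx =>
        have h : ((0, c • x) : R × S) = ((0, c) : R × S) * (0, x) := by
          simp [smul_eq_mul]
        rw [h]; exact Ideal.mul_mem_left _ _ hx
    have h : ((a, b) : R × S) = (a, 0) + (0, b) := by simp
    rw [h]
    exact Ideal.add_mem _ (key1 a (ht1.symm ▸ ha)) (key2 b (ht2.symm ▸ hb))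

variable {R S : Type*} [CommRing R] [CommRing S]

lemma BaerSelf.prod (hR : BaerSelf R) (hS : BaerSelf S) : BaerSelf (R × S) := by
  intro J f
  have hmem : ∀ x : R × S, x ∈ J ↔ x.1 ∈ J.map (RingHom.fst R S) ∧ x.2 ∈ J.map (RingHom.snd R S) := by
    intro x
    conv_lhs => rw [Ideal.ideal_prod_eq J]
    exact Iff.rfl
  have hm1 : ∀ r : R, r ∈ J.map (RingHom.fst R S) → ((r, 0) : R × S) ∈ J := fun r hr =>
    (hmem _).mpr ⟨hr, Ideal.zero_mem _⟩
  have hm2 : ∀ s : S, s ∈ J.map (RingHom.snd R S) → ((0, s) : R × S) ∈ J := fun s hs =>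
    (hmem _).mpr ⟨Ideal.zero_mem _, hs⟩
  let f1 : J.map (RingHom.fst R S) →ₗ[R] R :=
    { toFun := fun x => (f ⟨(x.1, 0), hm1 x.1 x.2⟩).1
      map_add' := by
        intro x y
        show (f ⟨((x + y : _), 0), hm1 _ (x + y).2⟩).1 =
          (f ⟨(x.1, 0), hm1 _ x.2⟩).1 + (f ⟨(y.1, 0), hm1 _ y.2⟩).1
        have h0 : (⟨((x + y : _), 0), hm1 _ (x + y).2⟩ : J) =
            ⟨(x.1, 0), hm1 _ x.2⟩ + ⟨(y.1, 0), hm1 _ y.2⟩ := Subtype.ext (by simp)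
        rw [h0, map_add]; rfl
      map_smul' := by
        intro c x
        show (f ⟨((c • x : _), 0), hm1 _ (c • x).2⟩).1 = c • (f ⟨(x.1, 0), hm1 _ x.2⟩).1
        have h0 : (⟨((c • x : _), 0), hm1 _ (c • x).2⟩ : J) =
            ((c, 0) : R × S) • ⟨(x.1, 0), hm1 _ x.2⟩ := Subtype.ext (by simp [smul_eq_mul])
        rw [h0, map_smul]; rfl }
  let f2 : J.map (RingHom.snd R S) →ₗ[S] S :=
    { toFun := fun x => (f ⟨(0, x.1), hm2 x.1 x.2⟩).2
      map_add' := by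
        intro x y
        show (f ⟨(0, (x + y : _)), hm2 _ (x + y).2⟩).2 =
          (f ⟨(0, x.1), hm2 _ x.2⟩).2 + (f ⟨(0, y.1), hm2 _ y.2⟩).2
        have h0 : (⟨(0, (x + y : _)), hm2 _ (x + y).2⟩ : J) =
            ⟨(0, x.1), hm2 _ x.2⟩ + ⟨(0, y.1), hm2 _ y.2⟩ := Subtype.ext (by simp)
        rw [h0, map_add]; rfl
      map_smul' := by
        intro c x
        show (f ⟨(0, (c • x : _)), hm2 _ (c • x).2⟩).2 = c • (f ⟨(0, x.1), hm2 _ x.2⟩).2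
        have h0 : (⟨(0, (c • x : _)), hm2 _ (c • x).2⟩ : J) =
            ((0, c) : R × S) • ⟨(0, x.1), hm2 _ x.2⟩ := Subtype.ext (by simp [smul_eq_mul])
        rw [h0, map_smul]; rfl }
  obtain ⟨r, hr⟩ := hR _ f1
  obtain ⟨s, hs⟩ := hS _ f2
  simp only [f1, f2, LinearMap.coe_mk, AddHom.coe_mk] at hr hs
  refine ⟨(r, s), ?_⟩
  rintro ⟨a, b⟩ hx
  obtain ⟨ha, hb⟩ := (hmem _).mp hx
  have hsplit : (⟨(a, b), hx⟩ : J) = ⟨(a, 0), hm1 a ha⟩ + ⟨(0, b), hm2 b hb⟩ :=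
    Subtype.ext (by simp)
  have hz1 : (f ⟨(a, 0), hm1 a ha⟩).2 = 0 := by
    have h0 : ((0, 1) : R × S) • (⟨(a, 0), hm1 a ha⟩ : J) = 0 := Subtype.ext (by simp [smul_eq_mul])
    have h1 := f.map_smul ((0, 1) : R × S) ⟨(a, 0), hm1 a ha⟩
    rw [h0, map_zero] at h1
    have h2 := congrArg Prod.snd h1.symm
    simpa using h2
  have hz2 : (f ⟨(0, b), hm2 b hb⟩).1 = 0 := by
    have h0 : ((1, 0) : R × S) • (⟨(0, b), hm2 b hb⟩ : J) = 0 := Subtype.ext (by simp [smul_eq_mul])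
    have h1 := f.map_smul ((1, 0) : R × S) ⟨(0, b), hm2 b hb⟩
    rw [h0, map_zero] at h1
    have h2 := congrArg Prod.fst h1.symm
    simpa using h2
  rw [hsplit, map_add]
  have e1 : (f ⟨(a, 0), hm1 a ha⟩).1 = a * r := hr a ha
  have e2 : (f ⟨(0, b), hm2 b hb⟩).2 = b * s := hs b hb
  ext
  · simpa [hz2, e1] using rfl
  · simpa [hz1, e2] using rfl

lemma BaerSelf.fst (h : BaerSelf (R × S)) : BaerSelf R := by
  intro J f
  have hm : ∀ x : R × S, x ∈ J.prod (⊤ : Ideal S) → x.1 ∈ J := fun x hx => hx.1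
  let f' : J.prod (⊤ : Ideal S) →ₗ[R × S] R × S :=
    { toFun := fun x => (f ⟨x.1.1, hm x.1 x.2⟩, x.1.2)
      map_add' := by
        intro x y
        show (f ⟨(x + y : _).1.1, hm _ (x + y).2⟩, ((x + y : _) : R × S).2) = _
        have h0 : (⟨(x + y : _).1.1, hm _ (x + y).2⟩ : J) =
            ⟨x.1.1, hm _ x.2⟩ + ⟨y.1.1, hm _ y.2⟩ := Subtype.ext rfl
        rw [h0, map_add]; rfl
      map_smul' := by
        intro c x
        show (f ⟨(c • x : _).1.1, hm _ (c • x).2⟩, ((c • x : _) : R × S).2) = _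
        have h0 : (⟨(c • x : _).1.1, hm _ (c • x).2⟩ : J) = c.1 • ⟨x.1.1, hm _ x.2⟩ :=
          Subtype.ext rfl
        rw [h0, map_smul]
        show (c.1 • f ⟨x.1.1, hm _ x.2⟩, c.2 • (x : R × S).2) = _
        rfl }
  obtain ⟨⟨r, s⟩, hr⟩ := h _ f'
  simp only [f', LinearMap.coe_mk, AddHom.coe_mk] at hr
  refine ⟨r, fun x hx => ?_⟩
  have hx' : ((x, 0) : R × S) ∈ J.prod (⊤ : Ideal S) := ⟨hx, trivial⟩
  have h1 := hr (x, 0) hx'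
  have h2 := congrArg Prod.fst h1
  simpa using h2


lemma BaerSelf.snd (h : BaerSelf (R × S)) : BaerSelf S :=
  (h.of_ringEquiv (RingEquiv.prodComm : R × S ≃+* S × R)).fst

variable {R : Type*} [CommRing R]

lemma mem_amalg_id (I : Ideal R) (x : R × R) : x ∈ amalg (RingHom.id R) I ↔ x.2 - x.1 ∈ I :=
  Iff.rfl

/-- `R ≅ R/(e) × R/(1-e)` for an idempotent `e`. -/
noncomputable def idemSplit (e : R) (he : IsIdempotentElem e) :
    R ≃+* (R ⧸ Ideal.span {e}) × R ⧸ Ideal.span {1 - e} := by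
  have hcop : IsCoprime (Ideal.span {e}) (Ideal.span {1 - e}) := by
    rw [Ideal.isCoprime_iff_add, Ideal.one_eq_top, Ideal.eq_top_iff_one]
    have h1 : (e : R) + (1 - e) ∈ Ideal.span {e} ⊔ Ideal.span {1 - e} :=
      Submodule.add_mem_sup (Ideal.subset_span rfl) (Ideal.subset_span rfl)
    simpa using h1
  have hbot : Ideal.span {e} * Ideal.span {(1 : R) - e} = ⊥ := by
    rw [Ideal.span_singleton_mul_span_singleton]
    have : e * (1 - e) = 0 := by
      have := he
      unfold IsIdempotentElem at this
      rw [mul_sub, mul_one, this, sub_self]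
    rw [this, Ideal.span_singleton_eq_bot.mpr rfl]
  exact ((RingEquiv.quotientBot R).symm.trans
    (Ideal.quotEquivOfEq hbot.symm)).trans
    (Ideal.quotientMulEquivQuotientProd _ _ hcop)

/-- `A⋈eA ≅ A × A/(1-e)` for an idempotent `e`. -/
noncomputable def dupSplit (e : R) (he : IsIdempotentElem e) :
    (amalg (RingHom.id R) (Ideal.span {e})) ≃+* R × R ⧸ Ideal.span {1 - e} := by
  refine RingEquiv.ofBijective
    (RingHom.prod ((RingHom.fst R R).comp (amalg (RingHom.id R) (Ideal.span {e})).subtype)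
      ((Ideal.Quotient.mk (Ideal.span {1 - e})).comp
        ((RingHom.snd R R).comp (amalg (RingHom.id R) (Ideal.span {e})).subtype))) ⟨?_, ?_⟩
  · rintro ⟨⟨a, b⟩, hab⟩ ⟨⟨c, d⟩, hcd⟩ hfg
    simp only [RingHom.prod_apply, RingHom.coe_comp, Function.comp_apply, Prod.mk.injEq] at hfg
    obtain ⟨h1, h2⟩ := hfg
    dsimp at h1 h2
    subst h1
    have hbd : b - d ∈ Ideal.span {(1 : R) - e} := by
      rwa [Ideal.Quotient.mk_eq_mk_iff_sub_mem] at h2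
    have hbd2 : b - d ∈ Ideal.span {e} := by
      have h3 : (b - d) = (b - a) - (d - a) := by ring
      rw [h3]
      exact Ideal.sub_mem _ hab hcd
    obtain ⟨u, hu⟩ := Ideal.mem_span_singleton.mp hbd2
    obtain ⟨v, hv⟩ := Ideal.mem_span_singleton.mp hbd
    have : b - d = 0 := by
      have h4 : e * (b - d) = b - d := by
        rw [hu, ← mul_assoc, he.eq]
      have h5 : e * (b - d) = 0 := by
        rw [hv, ← mul_assoc]
        have : e * (1 - e) = 0 := by
          rw [mul_sub, mul_one, he.eq, sub_self]
        rw [this, zero_mul]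
      rw [← h4, h5]
    have hbd3 : b = d := sub_eq_zero.mp this
    subst hbd3
    rfl
  · rintro ⟨a, c⟩
    obtain ⟨c, rfl⟩ := Ideal.Quotient.mk_surjective c
    refine ⟨⟨(a, a + e * (c - a)), ?_⟩, ?_⟩
    · show (a + e * (c - a)) - a ∈ Ideal.span {e}
      rw [add_sub_cancel_left]
      exact Ideal.mem_span_singleton.mpr ⟨c - a, rfl⟩
    · simp only [RingHom.prod_apply, RingHom.coe_comp, Function.comp_apply]
      refine Prod.ext rfl ?_
      show Ideal.Quotient.mk _ (a + e * (c - a)) = Ideal.Quotient.mk _ c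
      rw [Ideal.Quotient.mk_eq_mk_iff_sub_mem]
      refine Ideal.mem_span_singleton.mpr ⟨-(c - a), ?_⟩
      ring


end AuxQF

section Extract
variable {A : Type*} [CommRing A]
lemma exists_idem_of_baerSelf (I : Ideal A) (h : BaerSelf (amalg (RingHom.id A) I)) :
    ∃ e : A, IsIdempotentElem e ∧ I = Ideal.span {e} := by
  set S := amalg (RingHom.id A) I with hS
  let W : Ideal S :=
    { carrier := {x | ((x : A × A)).1 ∈ I ∧ ((x : A × A)).2 ∈ I}
      add_mem' := by
        rintro x y hx hy
        exact ⟨I.add_mem hx.1 hy.1, I.add_mem hx.2 hy.2⟩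
      zero_mem' := ⟨I.zero_mem, I.zero_mem⟩
      smul_mem' := by
        rintro c x hx
        exact ⟨I.mul_mem_left _ hx.1, I.mul_mem_left _ hx.2⟩ }
  have hWmem : ∀ x : S, x ∈ W ↔ ((x : A × A)).1 ∈ I ∧ ((x : A × A)).2 ∈ I := fun _ => Iff.rfl
  have hval : ∀ x : S, ((x : A × A)).1 ∈ I → (((((x : A × A)).1, 0) : A × A)) ∈ S := by
    intro x hx
    show (0 : A) - ((x : A × A)).1 ∈ I
    simpa using I.neg_mem hx
  let f : W →ₗ[S] S :=
    { toFun := fun x => ⟨((((x : S) : A × A)).1, 0), hval x.1 x.2.1⟩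
      map_add' := by
        intro x y
        show (⟨(((((x + y : W) : S) : A × A)).1, 0), _⟩ : S) = _
        apply Subtype.ext
        show ((((((x + y : W) : S) : A × A)).1, (0 : A)) : A × A) = _
        have : (((((x + y : W) : S) : A × A)).1 : A) =
            ((((x : S) : A × A)).1) + ((((y : S) : A × A)).1) := rfl
        rw [this]
        show (_ , (0:A)) = (_ + _, (0:A) + 0)
        rw [add_zero]
      map_smul' := by
        intro c x
        apply Subtype.ext
        show ((((((c • x : W) : S) : A × A)).1, (0 : A)) : A × A) =
          ((c : A × A).1 * (((x : S) : A × A)).1, (c : A × A).2 * 0)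
        have h1 : (((((c • x : W) : S) : A × A)).1 : A) = (c : A × A).1 * (((x : S) : A × A)).1 := rfl
        rw [h1, mul_zero] }
  obtain ⟨s, hr⟩ := h W f
  -- extract the relations
  have rel1 : ∀ i ∈ I, i * ((s : A × A)).1 = i := by
    intro i hi
    have hmemS : ((i, 0) : A × A) ∈ S := by
      show (0 : A) - i ∈ I
      simpa using I.neg_mem hi
    have hmemW : (⟨(i, 0), hmemS⟩ : S) ∈ W := ⟨hi, I.zero_mem⟩
    have h1 := hr ⟨(i, 0), hmemS⟩ hmemW
    have h2 : (i : A) = i * ((s : A × A)).1 := congrArg (fun z : S => ((z : A × A)).1) h1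
    exact h2.symm
  have rel2 : ∀ j ∈ I, j * ((s : A × A)).2 = 0 := by
    intro j hj
    have hmemS : ((0, j) : A × A) ∈ S := by
      show j - (0 : A) ∈ I
      simpa using hj
    have hmemW : (⟨(0, j), hmemS⟩ : S) ∈ W := ⟨I.zero_mem, hj⟩
    have h1 := hr ⟨(0, j), hmemS⟩ hmemW
    have h2 : (0 : A) = j * ((s : A × A)).2 := congrArg (fun z : S => ((z : A × A)).2) h1
    exact h2.symm
  set e : A := ((s : A × A)).1 - ((s : A × A)).2 with hedef
  have heI : e ∈ I := by
    have h2 : ((s : A × A)).2 - ((s : A × A)).1 ∈ I := s.2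
    simpa [hedef] using I.neg_mem h2
  have hre : ∀ i ∈ I, i * e = i := by
    intro i hi
    rw [hedef, mul_sub, rel1 i hi, rel2 i hi, sub_zero]
  refine ⟨e, ?_, ?_⟩
  · show e * e = e
    rw [mul_comm]
    exact hre e heI
  · apply le_antisymm
    · intro i hi
      exact Ideal.mem_span_singleton.mpr ⟨i, (mul_comm e i ▸ (hre i hi).symm : i = e * i)⟩
    · rw [Ideal.span_le, Set.singleton_subset_iff]
      exact heI

end Extract

/-- The amalgamated duplication `A⋈I` is quasi-Frobenius iff `A` is
quasi-Frobenius and `I = eA` for some idempotent `e ∈ A`. -/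
theorem duplication_quasiFrobenius_iff {A : Type*} [CommRing A] (I : Ideal A) :
    IsQuasiFrobenius (amalg (RingHom.id A) I) ↔
      IsQuasiFrobenius A ∧ ∃ e : A, IsIdempotentElem e ∧ I = Ideal.span {e} := by
  rw [isQuasiFrobenius_iff, isQuasiFrobenius_iff]
  constructor
  · rintro ⟨hN, hB⟩
    obtain ⟨e, he, hI⟩ := exists_idem_of_baerSelf I hB
    subst hI
    have hB2 : BaerSelf (A × A ⧸ Ideal.span {1 - e}) := hB.of_ringEquiv (dupSplit e he)
    haveI : IsNoetherianRing (↥(amalg (RingHom.id A) (Ideal.span {e}))) := hN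
    haveI hN2 : IsNoetherianRing (A × A ⧸ Ideal.span {1 - e}) :=
      isNoetherianRing_of_ringEquiv _ (dupSplit e he)
    refine ⟨⟨isNoetherianRing_of_surjective (A × A ⧸ Ideal.span {1 - e}) A
        (RingHom.fst A (A ⧸ Ideal.span {1 - e})) Prod.fst_surjective,
      hB2.fst⟩, e, he, rfl⟩
  · rintro ⟨⟨hN, hB⟩, e, he, rfl⟩
    haveI := hN
    have hBprod : BaerSelf ((A ⧸ Ideal.span {e}) × A ⧸ Ideal.span {1 - e}) :=
      hB.of_ringEquiv (idemSplit e he)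
    have hBq : BaerSelf (A ⧸ Ideal.span {1 - e}) := hBprod.snd
    have hNq : IsNoetherianRing (A ⧸ Ideal.span {1 - e}) :=
      isNoetherianRing_of_surjective A _ (Ideal.Quotient.mk _) Ideal.Quotient.mk_surjective
    haveI : IsNoetherianRing (A × A ⧸ Ideal.span {1 - e}) := isNoetherianRing_prod hN hNq
    exact ⟨isNoetherianRing_of_ringEquiv _ (dupSplit e he).symm,
      (hB.prod hBq).of_ringEquiv (dupSplit e he).symm⟩
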